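/- arXiv:1203.0692 — 3 statements merged into one kernel-verified Lean document; each statement's English description precedes it below -/
import Mathlib

section
/- The map G_{f_0}(S,E) = (σ(S), F_{f_0}(S^0, E)) is continuous on the metric space (X, d). -/
/-- The phase space `X = ⟦1,N⟧^ℕ × 𝔹^N`: pairs of a strategy (a sequence with values
in `{1,…,N}`) and a boolean state vector indexed by `{1,…,N}`. -/
def XX (N : ℕ) : Type := (ℕ → Set.Icc 1 N) × (Set.Icc 1 N → Bool)

/-- The distance `d((S,E),(Š,Ě)) = Σ_{k=1}^{N} δ(E_k,Ě_k) + (9/N) Σ_{k=1}^{∞} |S^k-Š^k|/10^k`,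
where the `k`-th term (`k ≥ 1`) of a strategy `S : ℕ → ⟦1,N⟧` is `S (k-1)`. -/
noncomputable def dX {N : ℕ} (p q : XX N) : ℝ :=
  (∑ k : Set.Icc 1 N, if p.2 k = q.2 k then (0 : ℝ) else 1) +
    (9 / N) * ∑' k : ℕ, |((p.1 k : ℕ) : ℝ) - ((q.1 k : ℕ) : ℝ)| / 10 ^ (k + 1)

/-- The map `G_{f₀}(S,E) = (σ(S), F_{f₀}(S⁰,E))`, where `σ` is the shift and
`F_{f₀}(k,E)` negates exactly the coordinate `k` of `E` (vectorial boolean negation). -/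
def G {N : ℕ} (p : XX N) : XX N :=
  (fun n => p.1 (n + 1), fun j => if j = p.1 0 then !(p.2 j) else p.2 j)

lemma summable_aux {N : ℕ} (p q : XX N) :
    Summable (fun k : ℕ => |((p.1 k : ℕ) : ℝ) - ((q.1 k : ℕ) : ℝ)| / 10 ^ (k + 1)) := by
  have hgeo : Summable (fun k : ℕ => ((N : ℝ) / 10) * (1 / 10) ^ k) :=
    (summable_geometric_of_lt_one (by norm_num) (by norm_num)).mul_left _
  refine Summable.of_nonneg_of_le (fun k => by positivity) (fun k => ?_) hgeo
  have h1 : |((p.1 k : ℕ) : ℝ) - ((q.1 k : ℕ) : ℝ)| ≤ N := by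
    have h2 : ((p.1 k : ℕ) : ℝ) ≤ N := by exact_mod_cast (p.1 k).2.2
    have h3 : ((q.1 k : ℕ) : ℝ) ≤ N := by exact_mod_cast (q.1 k).2.2
    have h4 : (0:ℝ) ≤ ((p.1 k : ℕ) : ℝ) := Nat.cast_nonneg _
    have h5 : (0:ℝ) ≤ ((q.1 k : ℕ) : ℝ) := Nat.cast_nonneg _
    rw [abs_le]; constructor <;> linarith
  have h6 : ((N:ℝ) / 10) * (1 / 10) ^ k = (N:ℝ) / 10 ^ (k + 1) := by
    rw [pow_succ, one_div_pow]; ring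
  rw [h6]
  exact div_le_div_of_nonneg_right h1 (by positivity) |>.trans_eq rfl

/-- `G_{f₀}` is continuous on the metric space `(X, d)`. -/
theorem G_continuous (N : ℕ) (hN : 1 ≤ N) :
    ∀ p : XX N, ∀ ε > (0 : ℝ), ∃ δ > (0 : ℝ),
      ∀ q : XX N, dX p q < δ → dX (G p) (G q) < ε := by
  intro p ε hε
  have hN' : (0:ℝ) < N := by exact_mod_cast Nat.lt_of_lt_of_le Nat.zero_lt_one hN
  refine ⟨min (min 1 (9 / (10 * N))) (ε / 10), lt_min (lt_min one_pos (by positivity)) (by positivity), ?_⟩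
  intro q hq
  set f : ℕ → ℝ := fun k => |((p.1 k : ℕ) : ℝ) - ((q.1 k : ℕ) : ℝ)| / 10 ^ (k + 1) with hf
  have hsum := summable_aux p q
  have hfnn : ∀ k, 0 ≤ f k := fun k => by positivity
  have htsum_nn : (0:ℝ) ≤ ∑' k, f k := tsum_nonneg hfnn
  have hS1nn : (0:ℝ) ≤ ∑ k : Set.Icc 1 N, if p.2 k = q.2 k then (0:ℝ) else 1 :=
    Finset.sum_nonneg fun i _ => by split <;> norm_num
  have hterm2nn : (0:ℝ) ≤ (9/(N:ℝ)) * ∑' k, f k := by positivity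
  have hdx : dX p q = (∑ k : Set.Icc 1 N, if p.2 k = q.2 k then (0:ℝ) else 1)
      + (9/(N:ℝ)) * ∑' k, f k := rfl
  -- p.2 = q.2
  have hE : p.2 = q.2 := by
    funext j
    by_contra hj
    have h1 : (1:ℝ) ≤ ∑ k : Set.Icc 1 N, if p.2 k = q.2 k then (0:ℝ) else 1 := by
      have := Finset.single_le_sum
        (f := fun k : Set.Icc 1 N => if p.2 k = q.2 k then (0:ℝ) else 1)
        (fun i _ => by by_cases h : p.2 i = q.2 i <;> simp [h]) (Finset.mem_univ j)
      simpa [hj] using this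
    have h2 : dX p q < 1 := lt_of_lt_of_le hq ((min_le_left _ _).trans (min_le_left _ _))
    rw [hdx] at h2
    linarith
  -- p.1 0 = q.1 0
  have hS0 : p.1 0 = q.1 0 := by
    by_contra h0
    have hne : ((p.1 0 : ℕ) : ℤ) - ((q.1 0 : ℕ) : ℤ) ≠ 0 := by
      rw [sub_ne_zero]
      exact_mod_cast fun h => h0 (Subtype.ext h)
    have h1z : (1:ℤ) ≤ |((p.1 0 : ℕ):ℤ) - ((q.1 0 : ℕ):ℤ)| := Int.one_le_abs hne
    have h1 : (1:ℝ) ≤ |((p.1 0 : ℕ):ℝ) - ((q.1 0 : ℕ):ℝ)| := by exact_mod_cast h1z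
    have hle : f 0 ≤ ∑' k, f k := hsum.le_tsum 0 (fun i _ => hfnn i)
    have hf0 : (1:ℝ)/10 ≤ f 0 := by
      simp only [hf]
      rw [pow_one]
      exact div_le_div_of_nonneg_right h1 (by norm_num) |>.trans_eq rfl
    have h2 : dX p q < 9 / (10 * N) := lt_of_lt_of_le hq ((min_le_left _ _).trans (min_le_right _ _))
    rw [hdx] at h2
    have h3 : (9/(N:ℝ)) * (1/10) ≤ (9/(N:ℝ)) * ∑' k, f k := by
      apply mul_le_mul_of_nonneg_left (hf0.trans hle) (by positivity)
    have h4 : (9/(N:ℝ)) * (1/10) = 9 / (10 * N) := by field_simp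
    linarith
  -- now bound dX (G p) (G q)
  have hGE : (G p).2 = (G q).2 := by
    funext j
    simp only [G, hE, hS0]
  have hstate : (∑ k : Set.Icc 1 N, if (G p).2 k = (G q).2 k then (0:ℝ) else 1) = 0 := by
    rw [hGE]; simp
  have hf0 : f 0 = 0 := by
    simp [hf, hS0]
  have hkey : ∀ k : ℕ, |(((G p).1 k : ℕ) : ℝ) - (((G q).1 k : ℕ) : ℝ)| / 10 ^ (k + 1)
      = 10 * f (k + 1) := by
    intro k
    show |((p.1 (k+1) : ℕ) : ℝ) - ((q.1 (k+1) : ℕ) : ℝ)| / 10 ^ (k + 1) = 10 * f (k+1)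
    simp only [hf]
    rw [pow_succ]
    field_simp
    ring
  have hsum' : Summable fun k => f (k + 1) := by
    exact (summable_nat_add_iff 1).mpr hsum
  have htail : ∑' k, f (k + 1) = ∑' k, f k := by
    have h := Summable.tsum_eq_zero_add (f := f) hsum
    rw [hf0, zero_add] at h
    exact h.symm
  have hG : dX (G p) (G q) = (9/(N:ℝ)) * (10 * ∑' k, f k) := by
    show (∑ k : Set.Icc 1 N, if (G p).2 k = (G q).2 k then (0:ℝ) else 1)
        + (9/(N:ℝ)) * ∑' k, |(((G p).1 k : ℕ) : ℝ) - (((G q).1 k : ℕ) : ℝ)| / 10 ^ (k + 1)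
        = (9/(N:ℝ)) * (10 * ∑' k, f k)
    rw [hstate, zero_add]
    congr 1
    rw [tsum_congr hkey, tsum_mul_left, htail]
  have hdq : dX p q < ε / 10 := lt_of_lt_of_le hq (min_le_right _ _)
  rw [hdx] at hdq
  rw [hG]
  nlinarith [htsum_nn, hS1nn]
end

section
/- The dynamical system (X, G_{f_0}) is topologically transitive: for any nonempty open sets U, V in (X,d), there exists n ∈ ℕ such that G_{f_0}^n(U) ∩ V ≠ ∅. -/
namespace GTaux

variable {N : ℕ}

/-- State after `n` steps of chaotic iteration with strategy `S` from state `E`. -/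
def evol (S : ℕ → Set.Icc 1 N) (E : Set.Icc 1 N → Bool) : ℕ → (Set.Icc 1 N → Bool)
  | 0 => E
  | n+1 => fun j => if j = S n then !(evol S E n j) else evol S E n j

lemma iterate_G (p : XX N) (n : ℕ) :
    G^[n] p = (fun k => p.1 (n + k), evol p.1 p.2 n) := by
  induction n with
  | zero => simp [evol]; rfl
  | succ n ih =>
    rw [Function.iterate_succ_apply', ih]
    refine Prod.ext ?_ ?_
    · funext k
      show p.1 (n + (k + 1)) = p.1 (n + 1 + k)
      rw [show n + (k + 1) = n + 1 + k from by omega]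
    · funext j
      show (if j = p.1 (n + 0) then !(evol p.1 p.2 n j) else evol p.1 p.2 n j) = _
      rw [Nat.add_zero]
      rfl

lemma evol_congr {S S' : ℕ → Set.Icc 1 N} {E : Set.Icc 1 N → Bool} {n : ℕ}
    (h : ∀ i < n, S i = S' i) : evol S E n = evol S' E n := by
  induction n with
  | zero => rfl
  | succ n ih =>
    unfold evol
    rw [ih (fun i hi => h i (Nat.lt_succ_of_lt hi)), h n (Nat.lt_succ_self n)]

lemma evol_shift (S : ℕ → Set.Icc 1 N) (E : Set.Icc 1 N → Bool) (n : ℕ) :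
    evol S E (n + 1)
      = evol (fun i => S (i + 1)) (fun j => if j = S 0 then !(E j) else E j) n := by
  induction n with
  | zero => rfl
  | succ n ih => unfold evol; rw [ih]

lemma evol_add (S : ℕ → Set.Icc 1 N) (E : Set.Icc 1 N → Bool) (a b : ℕ) :
    evol S E (a + b) = evol (fun i => S (a + i)) (evol S E a) b := by
  induction b with
  | zero => rfl
  | succ b ih =>
    show evol S E (a + b + 1) = _
    unfold evol
    rw [ih]

lemma evol_list (l : List (Set.Icc 1 N)) (hl : l.Nodup) (d : Set.Icc 1 N)
    (E : Set.Icc 1 N → Bool) :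
    evol (fun i => l.getD i d) E l.length
      = fun j => if j ∈ l then !(E j) else E j := by
  induction l generalizing E with
  | nil => funext j; simp [evol]
  | cons a t ih =>
    rw [List.length_cons, evol_shift]
    have h1 : (fun i => (a :: t).getD (i + 1) d) = fun i => t.getD i d := rfl
    rw [h1, ih (List.Nodup.of_cons hl)]
    funext j
    by_cases hjt : j ∈ t
    · have hja : j ≠ a := by
        rintro rfl; exact (List.nodup_cons.mp hl).1 hjt
      simp [hjt, hja, List.mem_cons]
    · by_cases hja : j = a
      · subst hja; simp [hjt]
      · simp [hjt, hja, List.mem_cons]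

lemma dX_self (p : XX N) : dX p p = 0 := by
  simp [dX]

lemma tsum_bound (Nr : ℝ) (hNr : 0 ≤ Nr) (g : ℕ → ℝ) (m : ℕ)
    (hgnn : ∀ k, 0 ≤ g k)
    (hgle : ∀ k, g k ≤ Nr * (1/10) ^ (k + 1))
    (hg0 : ∀ k < m, g k = 0) :
    (∑' k : ℕ, g k) ≤ Nr * (1/10) ^ m / 9 := by
  have hhsum : Summable (fun k : ℕ => Nr * (1/10) ^ (k + 1)) := by
    have h0 : Summable (fun k : ℕ => ((1:ℝ)/10) ^ k) :=
      summable_geometric_of_lt_one (by norm_num) (by norm_num)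
    exact ((summable_nat_add_iff (f := fun k : ℕ => ((1:ℝ)/10) ^ k) 1).mpr h0).mul_left _
  have hgsum : Summable g := Summable.of_nonneg_of_le hgnn hgle hhsum
  have hsplit := Summable.sum_add_tsum_nat_add (f := g) m hgsum
  have hfirst : (∑ k ∈ Finset.range m, g k) = 0 :=
    Finset.sum_eq_zero (fun k hk => hg0 k (Finset.mem_range.mp hk))
  have h1 : (∑' k : ℕ, g (k + m)) ≤ ∑' k : ℕ, Nr * (1/10) ^ (k + m + 1) := by
    apply Summable.tsum_le_tsum (fun k => hgle (k + m))
    · exact (summable_nat_add_iff (f := g) m).mpr hgsum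
    · exact (summable_nat_add_iff (f := fun k : ℕ => Nr * (1/10) ^ (k + 1)) m).mpr hhsum
  have h2 : (∑' k : ℕ, Nr * (1/10) ^ (k + m + 1))
      = Nr * (1/10) ^ (m+1) * (1 - 1/10)⁻¹ := by
    have he : ∀ k : ℕ, Nr * (1/10) ^ (k + m + 1)
        = (Nr * (1/10) ^ (m+1)) * (1/10) ^ k := by
      intro k; rw [show k + m + 1 = k + (m+1) from by omega, pow_add]; ring
    rw [tsum_congr he, tsum_mul_left,
      tsum_geometric_of_lt_one (by norm_num) (by norm_num)]
  rw [← hsplit, hfirst, zero_add]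
  calc (∑' k : ℕ, g (k + m)) ≤ Nr * (1/10) ^ (m+1) * (1 - 1/10)⁻¹ := h2 ▸ h1
    _ = Nr * (1/10) ^ m / 9 := by rw [pow_succ]; ring

end GTaux


open GTaux

/-- The dynamical system `(X, G_{f₀})` is topologically transitive: for all nonempty
open sets `U, V` of `(X,d)`, some iterate of `U` under `G_{f₀}` meets `V`. -/
theorem G_transitive (N : ℕ) (hN : 1 ≤ N) (U V : Set (XX N))
    (hU : ∀ x ∈ U, ∃ ε > (0 : ℝ), ∀ y, dX x y < ε → y ∈ U)
    (hV : ∀ x ∈ V, ∃ ε > (0 : ℝ), ∀ y, dX x y < ε → y ∈ V)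
    (hUne : U.Nonempty) (hVne : V.Nonempty) :
    ∃ n : ℕ, ∃ x ∈ U, G^[n] x ∈ V := by
  classical
  obtain ⟨p, hp⟩ := hUne
  obtain ⟨q, hq⟩ := hVne
  obtain ⟨ε, hε, hball⟩ := hU p hp
  obtain ⟨ε', hε', hball'⟩ := hV q hq
  obtain ⟨S, E⟩ := p
  obtain ⟨S', E'⟩ := q
  obtain ⟨m, hm⟩ := exists_pow_lt_of_lt_one hε (show (1:ℝ)/10 < 1 by norm_num)
  have hNpos : (0:ℝ) < N := by exact_mod_cast Nat.lt_of_lt_of_le Nat.zero_lt_one hN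
  set d0 : Set.Icc 1 N := ⟨1, Set.mem_Icc.mpr ⟨le_refl 1, hN⟩⟩ with hd0
  obtain ⟨Em, hEm⟩ : ∃ Em, Em = evol S E m := ⟨_, rfl⟩
  obtain ⟨L, hL⟩ : ∃ L : List (Set.Icc 1 N),
      L = (Finset.univ.filter (fun j : Set.Icc 1 N => Em j ≠ E' j)).toList := ⟨_, rfl⟩
  obtain ⟨c, hc⟩ : ∃ c, c = L.length := ⟨_, rfl⟩
  obtain ⟨T, hT⟩ : ∃ T : ℕ → Set.Icc 1 N, T = fun i =>
      if i < m then S i else if i < m + c then L.getD (i - m) d0 else S' (i - m - c) :=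
    ⟨_, rfl⟩
  refine ⟨m + c, (T, E), ?_, ?_⟩
  · -- (T, E) ∈ U
    apply hball
    have hval : ∀ A : ℕ → Set.Icc 1 N, ∀ k, (0:ℝ) ≤ ((A k : ℕ) : ℝ) ∧ ((A k : ℕ) : ℝ) ≤ N := by
      intro A k
      have h2 := (Set.mem_Icc.mp (A k).2)
      exact ⟨by positivity, by exact_mod_cast h2.2⟩
    obtain ⟨g, hg⟩ : ∃ g : ℕ → ℝ,
        g = fun k => |((S k : ℕ) : ℝ) - ((T k : ℕ) : ℝ)| / 10 ^ (k + 1) := ⟨_, rfl⟩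
    have hgnn : ∀ k, 0 ≤ g k := fun k => by
      rw [hg]; exact div_nonneg (abs_nonneg _) (by positivity)
    have hgle : ∀ k, g k ≤ (N:ℝ) * (1/10) ^ (k + 1) := by
      intro k
      have h1 := hval S k
      have h2 := hval T k
      have habs : |((S k : ℕ) : ℝ) - ((T k : ℕ) : ℝ)| ≤ N := by
        rw [abs_sub_le_iff]
        constructor <;> linarith [h1.1, h1.2, h2.1, h2.2]
      rw [hg]
      calc |((S k : ℕ) : ℝ) - ((T k : ℕ) : ℝ)| / 10 ^ (k+1) ≤ (N:ℝ) / 10 ^ (k+1) := by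
            apply div_le_div_of_nonneg_right habs <;> positivity
        _ = (N:ℝ) * (1/10) ^ (k+1) := by rw [div_pow, one_pow]; ring
    have hg0 : ∀ k < m, g k = 0 := by
      intro k hk
      have hTk : T k = S k := by rw [hT]; simp [hk]
      rw [hg]; simp [hTk]
    have hbd := GTaux.tsum_bound (N:ℝ) hNpos.le g m hgnn hgle hg0
    have hdx : dX (S, E) (T, E) = (9 / N) * ∑' k : ℕ, g k := by
      unfold dX; rw [hg]
      simp
    apply lt_of_le_of_lt _ hm
    rw [hdx]
    calc (9 / N) * (∑' k : ℕ, g k) ≤ (9 / N) * ((N:ℝ) * (1/10) ^ m / 9) := by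
          apply mul_le_mul_of_nonneg_left hbd; positivity
      _ = (1/10) ^ m := by field_simp
  · -- G^[m+c] (T, E) ∈ V
    rw [iterate_G (N := N) (T, E)]
    apply hball'
    have h1 : (fun k => (T, E).1 (m + c + k)) = S' := by
      funext k
      rw [hT]
      simp only
      rw [if_neg (by omega), if_neg (by omega)]
      congr 1; omega
    have h2 : evol (T, E).1 (T, E).2 (m + c) = E' := by
      show evol T E (m + c) = E'
      rw [evol_add]
      have hTm : evol T E m = Em := by
        rw [hEm]
        exact evol_congr (fun i hi => by rw [hT]; simp [hi])
      have hTc : evol (fun i => T (m + i)) Em c = evol (fun i => L.getD i d0) Em c := by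
        apply evol_congr
        intro i hi
        rw [hT]
        simp only
        rw [if_neg (by omega), if_pos (by omega)]
        congr 1; omega
      have hnd : L.Nodup := by rw [hL]; exact Finset.nodup_toList _
      rw [hTm, hTc, hc, evol_list L hnd d0 Em]
      funext j
      have hmem : j ∈ L ↔ Em j ≠ E' j := by
        rw [hL, Finset.mem_toList, Finset.mem_filter]
        simp
      by_cases hne : Em j ≠ E' j
      · rw [if_pos (hmem.mpr hne)]
        revert hne
        cases Em j <;> cases E' j <;> simp
      · rw [if_neg (fun h => hne (hmem.mp h))]
        push_neg at hne
        exact hne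
    rw [h1, h2, dX_self (N := N) (S', E')]
    exact hε'
end

section
/- The set of periodic points of G_{f_0} is dense in (X, d). -/
set_option maxHeartbeats 1000000




lemma iterG {N : ℕ} (p : XX N) (n : ℕ) :
    G^[n] p = (fun k => p.1 (k + n),
      fun j => xor (p.2 j)
        (decide (Odd (((Finset.range n).filter (fun i => p.1 i = j)).card)))) := by
  induction n with
  | zero =>
    obtain ⟨S, E⟩ := p
    simp [Prod.ext_iff]
    rfl
  | succ n ih =>
    rw [Function.iterate_succ_apply', ih]
    unfold G
    refine Prod.ext ?_ ?_
    · funext k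
      show p.1 (k + 1 + n) = p.1 (k + (n + 1))
      have : k + 1 + n = k + (n + 1) := by omega
      rw [this]
    · funext j
      simp only [Nat.zero_add]
      have hcard : ((Finset.range (n+1)).filter (fun i => p.1 i = j)).card =
        ((Finset.range n).filter (fun i => p.1 i = j)).card +
          (if p.1 n = j then 1 else 0) := by
        rw [Finset.range_add_one, Finset.filter_insert]
        split <;> simp [Finset.card_insert_of_notMem]
      rw [hcard]
      by_cases h : p.1 n = j
      · rw [if_pos h, if_pos h.symm]
        simp [Nat.odd_add_one, ← Nat.not_odd_iff_even, decide_not, Bool.xor_not]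
      · rw [if_neg h, if_neg (fun hh => h hh.symm), Nat.add_zero]

/-- The set of periodic points of `G_{f₀}` is dense in `(X, d)`. -/
theorem periodic_points_dense (N : ℕ) (hN : 1 ≤ N) :
    ∀ p : XX N, ∀ ε > (0 : ℝ), ∃ q : XX N, dX p q < ε ∧ ∃ n > 0, G^[n] q = q := by
  intro p ε hε
  obtain ⟨m0, hm0⟩ : ∃ n : ℕ, (1/10 : ℝ)^n < ε := exists_pow_lt_of_lt_one hε (by norm_num)
  set m : ℕ := m0 + 1 with hmdef
  have hmpos : 0 < m := Nat.succ_pos _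
  have hmε : (1/10 : ℝ)^m < ε :=
    lt_of_le_of_lt (pow_le_pow_of_le_one (by norm_num) (by norm_num) (Nat.le_succ m0)) hm0
  refine ⟨(fun k => p.1 (k % m), p.2), ?_, m + m, by omega, ?_⟩
  · -- distance bound
    have hNpos : (0:ℝ) < N := by exact_mod_cast hN
    set f : ℕ → ℝ := fun k => |((p.1 k : ℕ) : ℝ) - ((p.1 (k % m) : ℕ) : ℝ)| / 10 ^ (k + 1)
      with hfdef
    set g : ℕ → ℝ := fun k => (N:ℝ) * (1/10 : ℝ)^(k+1) with hgdef
    have hf0 : ∀ k < m, f k = 0 := by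
      intro k hk
      simp [hfdef, Nat.mod_eq_of_lt hk]
    have hfnn : ∀ k, 0 ≤ f k := by intro k; positivity
    have hfle : ∀ k, f k ≤ g k := by
      intro k
      have hS := (p.1 k).2
      have hT := (p.1 (k % m)).2
      simp only [Set.mem_Icc] at hS hT
      have hS1 : (1:ℝ) ≤ ((p.1 k : ℕ) : ℝ) := by exact_mod_cast hS.1
      have hS2 : ((p.1 k : ℕ) : ℝ) ≤ N := by exact_mod_cast hS.2
      have hT1 : (1:ℝ) ≤ ((p.1 (k % m) : ℕ) : ℝ) := by exact_mod_cast hT.1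
      have hT2 : ((p.1 (k % m) : ℕ) : ℝ) ≤ N := by exact_mod_cast hT.2
      have habs : |((p.1 k : ℕ) : ℝ) - ((p.1 (k % m) : ℕ) : ℝ)| ≤ N := by
        rw [abs_sub_le_iff]; constructor <;> linarith
      have : g k = (N:ℝ) / 10 ^ (k+1) := by
        rw [hgdef]; simp only; rw [div_pow, one_pow]; ring
      rw [this]
      show |((p.1 k : ℕ) : ℝ) - ((p.1 (k % m) : ℕ) : ℝ)| / 10 ^ (k + 1) ≤ (N:ℝ) / 10 ^ (k+1)
      gcongr
    have hgs : Summable g := by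
      have h0 : Summable (fun k : ℕ => (N:ℝ) * (1/10 : ℝ)^k) :=
        (summable_geometric_of_lt_one (by norm_num) (by norm_num)).mul_left _
      exact (summable_nat_add_iff 1).mpr h0
    have hfs : Summable f := Summable.of_nonneg_of_le hfnn hfle hgs
    have h1 : ∑' k, f k = ∑' k, f (k + m) := by
      rw [← hfs.sum_add_tsum_nat_add m]
      rw [Finset.sum_eq_zero (fun i hi => hf0 i (Finset.mem_range.mp hi)), zero_add]
    have h2 : ∑' k, f (k + m) ≤ ∑' k, g (k + m) :=
      Summable.tsum_le_tsum (fun k => hfle (k + m)) ((summable_nat_add_iff m).mpr hfs)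
        ((summable_nat_add_iff m).mpr hgs)
    have h3 : ∑' k, g (k + m) = (N:ℝ) * (1/10:ℝ)^m / 9 := by
      have he : ∀ k : ℕ, g (k + m) = ((N:ℝ) * (1/10:ℝ)^(m+1)) * (1/10:ℝ)^k := by
        intro k; rw [hgdef]; simp only; rw [show k + m + 1 = (m+1) + k by omega, pow_add]
        ring
      rw [tsum_congr he, tsum_mul_left,
        tsum_geometric_of_lt_one (by norm_num) (by norm_num), pow_succ]
      norm_num
      ring
    have key : (9 / N) * ∑' k, f k ≤ (1/10:ℝ)^m := by
      rw [h1]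
      have := le_trans h2 (le_of_eq h3)
      rw [div_mul_eq_mul_div, div_le_iff₀ hNpos]
      calc 9 * ∑' (k : ℕ), f (k + m) ≤ 9 * ((N:ℝ) * (1/10:ℝ)^m / 9) := by linarith
        _ = (1/10:ℝ)^m * N := by field_simp
    show (∑ k : Set.Icc 1 N, if p.2 k = p.2 k then (0:ℝ) else 1) + (9/N) * ∑' k, f k < ε
    have hz : (∑ k : Set.Icc 1 N, if p.2 k = p.2 k then (0:ℝ) else 1) = 0 := by simp
    rw [hz, zero_add]
    exact lt_of_le_of_lt key hmε
  · -- periodicity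
    rw [iterG (p := ((fun k => p.1 (k % m), p.2) : XX N))]
    refine Prod.ext ?_ ?_
    · funext k
      show p.1 ((k + (m + m)) % m) = p.1 (k % m)
      have : (k + (m + m)) % m = k % m := by
        rw [show k + (m + m) = k + m + m by ring, Nat.add_mod_right, Nat.add_mod_right]
      rw [this]
    · funext j
      show xor (p.2 j) _ = p.2 j
      have hper : ∀ i : ℕ, p.1 ((m + i) % m) = p.1 (i % m) := by
        intro i
        have : (m + i) % m = i % m := by
          rw [Nat.add_comm, Nat.add_mod_right]
        rw [this]
      have key : ((Finset.range (m+m)).filter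
            (fun i => (fun k => p.1 (k % m)) i = j)).card =
          2 * ((Finset.range m).filter (fun i => (fun k => p.1 (k % m)) i = j)).card := by
        rw [Finset.range_add, Finset.filter_union, Finset.card_union_of_disjoint, two_mul]
        · congr 1
          rw [Finset.filter_map, Finset.card_map]
          congr 1
          apply Finset.filter_congr
          intro i _
          simp [addLeftEmbedding, hper i]
        · refine Finset.disjoint_filter_filter ?_
          rw [Finset.disjoint_left]
          intro x hx hx2
          simp only [Finset.mem_range] at hx
          simp only [Finset.mem_map, addLeftEmbedding] at hx2
          obtain ⟨i, _, hi⟩ := hx2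
          have hmi : m + i = x := hi
          omega
      rw [key]
      have : ¬ Odd (2 * ((Finset.range m).filter
          (fun i => (fun k => p.1 (k % m)) i = j)).card) :=
        (Nat.not_odd_iff_even).mpr (even_two_mul _)
      simp [this]
end
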